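/- arXiv:1304.7957 — 5 statements merged into one kernel-verified Lean document; each statement's English description precedes it below -/
import Mathlib

section
/- Let m ≥ t ≥ 2 be positive integers with t | m. Then the zero-sum Ramsey number R(K_{1,m}, Z_t) equals m + t - 1 if both m and t are even, and equals m + t otherwise. -/
open Finset

/-- `D` is the Davenport constant of `G`: the least `d > 0` such that every
sequence (multiset) of `d` elements of `G` has a nonempty zero-sum subsequence. -/
def IsDavenport (G : Type*) [AddCommGroup G] (D : ℕ) : Prop :=
  IsLeast {d : ℕ | 0 < d ∧ ∀ S : Multiset G, Multiset.card S = d →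
    ∃ T, T ≤ S ∧ T ≠ 0 ∧ T.sum = 0} D

/-- `s` is the generalized EGZ invariant `s_m(G)`: the least `d > 0` such that every
sequence of `d` elements of `G` has a zero-sum subsequence of length exactly `m`. -/
def IsEGZConst (G : Type*) [AddCommGroup G] (m s : ℕ) : Prop :=
  IsLeast {d : ℕ | 0 < d ∧ ∀ S : Multiset G, Multiset.card S = d →
    ∃ T, T ≤ S ∧ Multiset.card T = m ∧ T.sum = 0} s

/-- The coloring `c` admits a zero-sum hyperstar: `m` distinct `r`-sets with a common
vertex whose colors sum to zero. -/
def HasZeroSumStar (G : Type*) [AddCommGroup G] (r m d : ℕ)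
    (c : Finset (Fin d) → G) : Prop :=
  ∃ v : Fin d, ∃ F : Finset (Finset (Fin d)), F.card = m ∧
    (∀ e ∈ F, e.card = r ∧ v ∈ e) ∧ ∑ e ∈ F, c e = 0

/-- The coloring `c` admits a zero-sum intersecting family: `m` distinct `r`-sets with
pairwise nonempty intersections whose colors sum to zero. -/
def HasZeroSumIntersecting (G : Type*) [AddCommGroup G] (r m d : ℕ)
    (c : Finset (Fin d) → G) : Prop :=
  ∃ F : Finset (Finset (Fin d)), F.card = m ∧ (∀ e ∈ F, e.card = r) ∧
    (∀ e ∈ F, ∀ f ∈ F, (e ∩ f).Nonempty) ∧ ∑ e ∈ F, c e = 0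

/-- The coloring `c` admits a zero-sum delta-system of type `S(r,q,m)`: `m` distinct
`r`-sets whose pairwise intersections all equal a fixed `q`-set `Q`, with zero color sum. -/
def HasZeroSumDelta (G : Type*) [AddCommGroup G] (r q m d : ℕ)
    (c : Finset (Fin d) → G) : Prop :=
  ∃ Q : Finset (Fin d), Q.card = q ∧ ∃ F : Finset (Finset (Fin d)), F.card = m ∧
    (∀ e ∈ F, e.card = r) ∧ (∀ e ∈ F, ∀ f ∈ F, e ≠ f → e ∩ f = Q) ∧
    ∑ e ∈ F, c e = 0

/-- `R` is the zero-sum Ramsey number `R(S_m^{(r)}, G)` for hyperstars. -/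
def IsStarRamsey (G : Type*) [AddCommGroup G] (r m R : ℕ) : Prop :=
  IsLeast {d : ℕ | 0 < d ∧ ∀ c : Finset (Fin d) → G, HasZeroSumStar G r m d c} R

/-- `R` is the zero-sum Ramsey number `R(I_m^{(r)}, G)` for intersecting families. -/
def IsIntRamsey (G : Type*) [AddCommGroup G] (r m R : ℕ) : Prop :=
  IsLeast {d : ℕ | 0 < d ∧ ∀ c : Finset (Fin d) → G, HasZeroSumIntersecting G r m d c} R

/-- `R` is the zero-sum Ramsey number `R(S(r,q,m), G)` for delta-systems. -/
def IsDeltaRamsey (G : Type*) [AddCommGroup G] (r q m R : ℕ) : Prop :=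
  IsLeast {d : ℕ | 0 < d ∧ ∀ c : Finset (Fin d) → G, HasZeroSumDelta G r q m d c} R

section ZeroSumStarProof

lemma star_of_subset {d m : ℕ} {G : Type*} [AddCommGroup G] (c : Finset (Fin d) → G) (v : Fin d)
    (W : Finset (Fin d)) (hW : v ∉ W) (hcard : W.card = m)
    (hsum : ∑ w ∈ W, c {v, w} = 0) : HasZeroSumStar G 2 m d c := by
  have hinj : Set.InjOn (fun w => ({v, w} : Finset (Fin d))) W := by
    intro w hw w' hw' h
    simp only at h
    have : w ∈ ({v, w'} : Finset (Fin d)) := by rw [← h]; simp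
    rcases Finset.mem_insert.1 this with h' | h'
    · exact absurd (h' ▸ hw) hW
    · simpa using h'
  refine ⟨v, W.image (fun w => ({v, w} : Finset (Fin d))), ?_, ?_, ?_⟩
  · rw [Finset.card_image_of_injOn hinj, hcard]
  · intro e he
    obtain ⟨w, hw, rfl⟩ := Finset.mem_image.1 he
    have hvw : v ≠ w := fun h => hW (h ▸ hw)
    exact ⟨Finset.card_pair hvw, by simp⟩
  · rw [Finset.sum_image hinj]; exact hsum

lemma ext_lemma {ι : Type*} [DecidableEq ι] {s : ℕ} (k : ℕ) (A : Finset ι) (f : ι → ZMod s)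
    (hA : k * s + (s - 1) ≤ A.card) :
    ∃ F ⊆ A, F.card = k * s ∧ ∑ i ∈ F, f i = 0 := by
  induction k generalizing A with
  | zero => exact ⟨∅, empty_subset _, by simp⟩
  | succ k ih =>
    have hmul : (k + 1) * s = k * s + s := by ring
    have h2 : 2 * s - 1 ≤ A.card := by omega
    obtain ⟨T, hTA, hTcard, hTsum⟩ := ZMod.erdos_ginzburg_ziv f h2
    have hrec : k * s + (s - 1) ≤ (A \ T).card := by
      rw [card_sdiff_of_subset hTA]; omega
    obtain ⟨F, hFA, hFcard, hFsum⟩ := ih _ hrec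
    have hdisj : Disjoint F T := (sdiff_disjoint.mono_left hFA)
    refine ⟨F ∪ T, union_subset (hFA.trans (sdiff_subset)) hTA, ?_, ?_⟩
    · rw [card_union_of_disjoint hdisj, hFcard, hTcard, hmul]
    · rw [sum_union hdisj, hFsum, hTsum, add_zero]

lemma upper_any (m t : ℕ) (ht : 2 ≤ t) (hdvd : t ∣ m) (d : ℕ) (hd : m + t ≤ d)
    (c : Finset (Fin d) → ZMod t) : HasZeroSumStar (ZMod t) 2 m d c := by
  obtain ⟨k, rfl⟩ := hdvd
  have hd0 : 0 < d := by omega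
  let v : Fin d := ⟨0, hd0⟩
  have hA : k * t + (t - 1) ≤ (univ.erase v).card := by
    rw [card_erase_of_mem (mem_univ v), card_univ, Fintype.card_fin]
    have : t * k = k * t := by ring
    omega
  obtain ⟨F, hFA, hFcard, hFsum⟩ := ext_lemma k (univ.erase v) (fun w => c {v, w}) hA
  exact star_of_subset c v F (fun h => (mem_erase.1 (hFA h)).1 rfl)
    (by rw [hFcard]; ring) hFsum

lemma push {G : Type*} [AddCommGroup G] (r m : ℕ) {d D : ℕ} (hdD : d ≤ D)
    (c : Finset (Fin D) → G) (hc : ¬ HasZeroSumStar G r m D c) :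
    ∃ c' : Finset (Fin d) → G, ¬ HasZeroSumStar G r m d c' := by
  classical
  let emb : Fin d ↪ Fin D := (Fin.castLEEmb hdD)
  refine ⟨fun e => c (e.map emb), fun ⟨v, F, hcard, hmem, hsum⟩ => hc ?_⟩
  have hinj : Function.Injective (fun e : Finset (Fin d) => e.map emb) :=
    fun a b h => Finset.map_injective emb h
  refine ⟨emb v, F.image (fun e => e.map emb), ?_, ?_, ?_⟩
  · rw [Finset.card_image_of_injective _ hinj, hcard]
  · intro e' he'
    obtain ⟨e, he, rfl⟩ := Finset.mem_image.1 he'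
    exact ⟨by rw [Finset.card_map]; exact (hmem e he).1,
      Finset.mem_map_of_mem emb (hmem e he).2⟩
  · rw [Finset.sum_image (fun a _ b _ h => hinj h)]; exact hsum

lemma noStar_of_connection (m t D : ℕ) (ht : 2 ≤ t) (hD0 : 0 < D) (hDle : D ≤ m + t - 1)
    (htm : t ≤ m)
    (C : Finset (ZMod D)) (hsym : ∀ x ∈ C, -x ∈ C) (h0 : (0 : ZMod D) ∉ C)
    (hCcard : C.card = t - 1) :
    ∃ c' : Finset (Fin D) → ZMod t, ¬ HasZeroSumStar (ZMod t) 2 m D c' := by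
  classical
  haveI : NeZero D := ⟨by omega⟩
  haveI : NeZero t := ⟨by omega⟩
  set ι₀ : Fin D → ZMod D := fun x => (x.val : ZMod D) with hι₀
  have hiinj : Function.Injective ι₀ := by
    intro x y h
    have hx := ZMod.val_cast_of_lt (a := x.val) x.isLt
    have hy := ZMod.val_cast_of_lt (a := y.val) y.isLt
    apply Fin.ext
    rw [← hx, ← hy]
    exact congrArg ZMod.val h
  have hbij : Function.Bijective ι₀ := by
    rw [Fintype.bijective_iff_injective_and_card]
    exact ⟨hiinj, by simp [ZMod.card]⟩
  set eqv := Equiv.ofBijective ι₀ hbij with heqv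
  -- the coloring
  set c : Finset (Fin D) → ZMod t :=
    fun e => if (∃ x ∈ e, ∃ y ∈ e, ι₀ x - ι₀ y ∈ C) then 1 else 0 with hc
  refine ⟨c, fun ⟨v, F, hcard, hmem, hsum⟩ => ?_⟩
  set inC : Fin D → Prop := fun w => ι₀ w - ι₀ v ∈ C with hinC
  have hcedge : ∀ w : Fin D, w ≠ v → c (insert v {w}) = if inC w then 1 else 0 := by
    intro w hwv
    have : (∃ x ∈ insert v ({w} : Finset (Fin D)), ∃ y ∈ insert v ({w} : Finset (Fin D)),
        ι₀ x - ι₀ y ∈ C) ↔ inC w := by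
      constructor
      · rintro ⟨x, hx, y, hy, hxy⟩
        simp only [Finset.mem_insert, Finset.mem_singleton] at hx hy
        rcases hx with rfl | rfl <;> rcases hy with rfl | rfl
        · exact absurd (by simpa using hxy) h0
        · have := hsym _ hxy; simpa [hinC, neg_sub] using this
        · exact hxy
        · exact absurd (by simpa using hxy) h0
      · intro h; exact ⟨w, by simp, v, by simp, h⟩
    simp only [hc]
    rw [if_congr this rfl rfl]
  -- counting
  have hones : ((univ : Finset (Fin D)).filter inC).card = t - 1 := by
    rw [← hCcard]
    apply Finset.card_bij' (fun w _ => ι₀ w - ι₀ v) (fun z _ => eqv.symm (z + ι₀ v))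
    · intro w hw; exact (Finset.mem_filter.1 hw).2
    · intro z hz
      simp only [Finset.mem_filter, Finset.mem_univ, true_and, hinC]
      have : ι₀ (eqv.symm (z + ι₀ v)) = z + ι₀ v := eqv.apply_symm_apply (z + ι₀ v)
      rw [this]; simpa using hz
    · intro w hw
      rw [sub_add_cancel]
      exact eqv.symm_apply_apply w
    · intro z hz
      have : ι₀ (eqv.symm (z + ι₀ v)) = z + ι₀ v := eqv.apply_symm_apply (z + ι₀ v)
      rw [this, add_sub_cancel_right]
  -- relate erase-filter to filter
  have hinCv : ¬ inC v := by simpa [hinC] using h0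
  have heraseones : ((univ.erase v).filter inC).card = t - 1 := by
    rw [filter_erase, Finset.erase_eq_of_notMem (by simp [hinCv]), hones]
  have hzeros : ((univ.erase v).filter (fun w => ¬ inC w)).card = D - t := by
    have := Finset.card_filter_add_card_filter_not (s := univ.erase v) (p := inC)
    rw [heraseones, card_erase_of_mem (mem_univ v), card_univ, Fintype.card_fin] at this
    omega
  -- other endpoints
  have hedge : ∀ e ∈ F, ∃ w, w ≠ v ∧ e = insert v {w} := by
    intro e he
    have hme := hmem e he
    obtain ⟨x, y, hxy, rfl⟩ := Finset.card_eq_two.1 hme.1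
    rcases Finset.mem_insert.1 hme.2 with rfl | hv'
    · exact ⟨y, fun h => hxy h.symm, rfl⟩
    · have : v = y := Finset.mem_singleton.1 hv'
      subst this
      exact ⟨x, fun h => hxy h, by rw [Finset.pair_comm]⟩
  set oth : Finset (Fin D) → Fin D :=
    fun e => if h : ∃ w, w ≠ v ∧ e = insert v {w} then h.choose else v with hoth
  have hothspec : ∀ e ∈ F, oth e ≠ v ∧ e = insert v {oth e} := by
    intro e he
    have h := hedge e he
    simp only [hoth, dif_pos h]
    exact h.choose_spec
  set WF := F.image oth with hWF
  have hinjoth : Set.InjOn oth F := by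
    intro e he e' he' h
    rw [(hothspec e he).2, (hothspec e' he').2, h]
  have hWFcard : WF.card = m := by rw [hWF, Finset.card_image_of_injOn hinjoth, hcard]
  have hWFsub : WF ⊆ univ.erase v := by
    intro w hw
    obtain ⟨e, he, rfl⟩ := Finset.mem_image.1 hw
    exact Finset.mem_erase.2 ⟨(hothspec e he).1, mem_univ _⟩
  set j := (WF.filter inC).card with hj
  have hsumj : ((j : ℕ) : ZMod t) = 0 := by
    have h1 : ∑ w ∈ WF, c (insert v {w}) = ∑ e ∈ F, c e := by
      rw [hWF, Finset.sum_image hinjoth]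
      exact Finset.sum_congr rfl (fun e he => by rw [← (hothspec e he).2])
    have h2 : ∑ w ∈ WF, c (insert v {w}) = ∑ w ∈ WF, if inC w then (1 : ZMod t) else 0 := by
      refine Finset.sum_congr rfl (fun w hw => ?_)
      exact hcedge w (Finset.mem_erase.1 (hWFsub hw)).1
    rw [hj, ← Finset.sum_boole inC WF, ← h2, h1]
    exact hsum
  have hjle : j ≤ t - 1 := by
    rw [← heraseones]
    exact Finset.card_le_card (Finset.filter_subset_filter inC hWFsub)
  have hjge : 1 ≤ j := by
    have hsplit := Finset.card_filter_add_card_filter_not (s := WF) (p := inC)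
    rw [hWFcard, ← hj] at hsplit
    have hle : (WF.filter (fun w => ¬ inC w)).card ≤ D - t := by
      rw [← hzeros]
      exact Finset.card_le_card (Finset.filter_subset_filter _ hWFsub)
    omega
  have := (ZMod.natCast_eq_zero_iff j t).1 hsumj
  have := Nat.le_of_dvd (by omega) this
  omega

lemma conn_of_raw (t D : ℕ) (hD : 0 < D) (raw : Finset ℕ)
    (hsub : ∀ i ∈ raw, 1 ≤ i ∧ i < D) (hcl : ∀ i ∈ raw, D - i ∈ raw)
    (hcard : raw.card = t - 1) :
    ∃ C : Finset (ZMod D), (∀ x ∈ C, -x ∈ C) ∧ (0 : ZMod D) ∉ C ∧ C.card = t - 1 := by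
  haveI : NeZero D := ⟨hD.ne'⟩
  have hneg : ∀ i ∈ raw, -((i : ℕ) : ZMod D) = ((D - i : ℕ) : ZMod D) := by
    intro i hi
    have hle : i ≤ D := (hsub i hi).2.le
    have h0 : ((D - i : ℕ) : ZMod D) + ((i : ℕ) : ZMod D) = 0 := by
      rw [← Nat.cast_add, Nat.sub_add_cancel hle, ZMod.natCast_self]
    exact neg_eq_of_add_eq_zero_left h0
  refine ⟨raw.image (Nat.cast : ℕ → ZMod D), ?_, ?_, ?_⟩
  · intro x hx
    obtain ⟨i, hi, rfl⟩ := Finset.mem_image.1 hx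
    rw [hneg i hi]
    exact Finset.mem_image.2 ⟨D - i, hcl i hi, rfl⟩
  · intro hx
    obtain ⟨i, hi, hcast⟩ := Finset.mem_image.1 hx
    have hd := (ZMod.natCast_eq_zero_iff i D).1 hcast
    have hs := hsub i hi
    have := Nat.le_of_dvd (by omega) hd
    omega
  · rw [← hcard]
    apply Finset.card_image_of_injOn
    intro i hi j hj hij
    have h1 := ZMod.val_cast_of_lt (hsub i (Finset.mem_coe.1 hi)).2
    have h2 := ZMod.val_cast_of_lt (hsub j (Finset.mem_coe.1 hj)).2
    rw [← h1, ← h2, hij]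

lemma conn_exists (t D : ℕ) (ht : 2 ≤ t) (hD : t - 1 < D)
    (hpar : ¬ Even t ∨ Even D) :
    ∃ C : Finset (ZMod D), (∀ x ∈ C, -x ∈ C) ∧ (0 : ZMod D) ∉ C ∧ C.card = t - 1 := by
  have hD0 : 0 < D := by omega
  set h : ℕ := (t - 1) / 2 with hh
  have hbij : Set.InjOn (fun i => D - i) (Icc 1 h) := by
    intro i hi j hj hij
    simp only [Finset.coe_Icc, Set.mem_Icc] at hi hj
    have hij' : D - i = D - j := hij
    omega
  have hbase_sub : ∀ i ∈ (Icc 1 h) ∪ (Icc 1 h).image (fun i => D - i), 1 ≤ i ∧ i < D := by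
    intro i hi
    rcases Finset.mem_union.1 hi with hi' | hi'
    · simp only [Finset.mem_Icc] at hi'; omega
    · obtain ⟨i₀, hi₀, rfl⟩ := Finset.mem_image.1 hi'
      simp only [Finset.mem_Icc] at hi₀; omega
  have hdisj : Disjoint (Icc 1 h) ((Icc 1 h).image (fun i => D - i)) := by
    rw [Finset.disjoint_left]
    intro i hi hi'
    obtain ⟨i₀, hi₀, rfl⟩ := Finset.mem_image.1 hi'
    simp only [Finset.mem_Icc] at hi hi₀
    omega
  have hbase_card : ((Icc 1 h) ∪ (Icc 1 h).image (fun i => D - i)).card = 2 * h := by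
    rw [Finset.card_union_of_disjoint hdisj, Finset.card_image_of_injOn hbij,
      Nat.card_Icc]
    omega
  have hbase_cl : ∀ i ∈ (Icc 1 h) ∪ (Icc 1 h).image (fun i => D - i),
      D - i ∈ (Icc 1 h) ∪ (Icc 1 h).image (fun i => D - i) := by
    intro i hi
    rcases Finset.mem_union.1 hi with hi' | hi'
    · exact Finset.mem_union_right _ (Finset.mem_image.2 ⟨i, hi', rfl⟩)
    · obtain ⟨i₀, hi₀, rfl⟩ := Finset.mem_image.1 hi'
      have hi₀' := Finset.mem_Icc.1 hi₀
      have : D - (D - i₀) = i₀ := by omega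
      rw [this]
      exact Finset.mem_union_left _ hi₀
  by_cases hev : Even t
  · -- t even, D even
    have hDeven : Even D := hpar.resolve_left (by simpa using hev)
    obtain ⟨t2, ht2⟩ := hev
    obtain ⟨D2, hD2⟩ := hDeven
    have hhval : 2 * h = t - 2 := by omega
    apply conn_of_raw t D hD0 (((Icc 1 h) ∪ (Icc 1 h).image (fun i => D - i)) ∪ {D / 2})
    · intro i hi
      rcases Finset.mem_union.1 hi with hi' | hi'
      · exact hbase_sub i hi'
      · simp only [Finset.mem_singleton] at hi'; omega
    · intro i hi
      rcases Finset.mem_union.1 hi with hi' | hi'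
      · exact Finset.mem_union_left _ (hbase_cl i hi')
      · simp only [Finset.mem_singleton] at hi'
        subst hi'
        apply Finset.mem_union_right
        simp only [Finset.mem_singleton]
        omega
    · rw [Finset.card_union_of_disjoint, hbase_card, Finset.card_singleton]
      · omega
      · rw [Finset.disjoint_right]
        intro i hi hi'
        simp only [Finset.mem_singleton] at hi
        subst hi
        have := hbase_sub _ hi'
        rcases Finset.mem_union.1 hi' with h2 | h2
        · simp only [Finset.mem_Icc] at h2; omega
        · obtain ⟨i₀, hi₀, heq⟩ := Finset.mem_image.1 h2
          simp only [Finset.mem_Icc] at hi₀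
          omega
  · -- t odd
    have hhval : 2 * h = t - 1 := by
      rcases Nat.even_or_odd t with he | ho
      · exact absurd he hev
      · obtain ⟨t2, ht2⟩ := ho; omega
    apply conn_of_raw t D hD0 ((Icc 1 h) ∪ (Icc 1 h).image (fun i => D - i))
      hbase_sub hbase_cl
    rw [hbase_card]; omega

lemma claimA (m t : ℕ) (ht : 2 ≤ t) (htm : t ≤ m) (hdvd : t ∣ m) (hte : Even t)
    (c : Finset (Fin (m + t - 1)) → ZMod t)
    (hno : ¬ HasZeroSumStar (ZMod t) 2 m (m + t - 1) c) (v : Fin (m + t - 1)) :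
    ((univ.erase v).filter (fun w => (c {v, w}).val % 2 = 1)).card % 2 = 1 := by
  haveI : NeZero t := ⟨by omega⟩
  obtain ⟨s, hs⟩ := hte
  obtain ⟨k, hk⟩ := hdvd
  have hs1 : 1 ≤ s := by omega
  haveI : NeZero s := ⟨by omega⟩
  have hm2 : m = 2 * (s * k) := by rw [hk, hs]; ring
  by_contra hodd
  set W : Finset (Fin (m + t - 1)) := univ.erase v with hW
  set O := W.filter (fun w => (c {v, w}).val % 2 = 1) with hO
  set E := W.filter (fun w => ¬ ((c {v, w}).val % 2 = 1)) with hE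
  have hWcard : W.card = m + t - 2 := by
    rw [hW, card_erase_of_mem (mem_univ v), card_univ, Fintype.card_fin]
    omega
  have hsplit : O.card + E.card = m + t - 2 := by
    rw [hO, hE, Finset.card_filter_add_card_filter_not, hWcard]
  have hOeven : O.card % 2 = 0 := by revert hodd; omega
  set q₁ := O.card / 2 with hq₁
  set q₂ := E.card / 2 with hq₂
  have hq₁' : q₁ * 2 = O.card := by omega
  have hq₂' : q₂ * 2 = E.card := by omega
  -- pairing equivalences
  set eO : Fin q₁ × Fin 2 ≃ {x // x ∈ O} :=
    (finProdFinEquiv.trans ((finCongr hq₁').trans O.equivFin.symm)) with heO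
  set eE : Fin q₂ × Fin 2 ≃ {x // x ∈ E} :=
    (finProdFinEquiv.trans ((finCongr hq₂').trans E.equivFin.symm)) with heE
  set Ψ : (Fin q₁ ⊕ Fin q₂) × Fin 2 → Fin (m + t - 1) :=
    fun p => Sum.elim (fun i => (eO (i, p.2) : Fin (m + t - 1))) (fun i => (eE (i, p.2) : Fin (m + t - 1))) p.1
    with hΨ
  have hΨO : ∀ i j, Ψ (Sum.inl i, j) ∈ O := fun i j => (eO (i, j)).2
  have hΨE : ∀ i j, Ψ (Sum.inr i, j) ∈ E := fun i j => (eE (i, j)).2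
  have hOE : ∀ x ∈ O, x ∉ E := by
    intro x hx hx'
    rw [hO, Finset.mem_filter] at hx
    rw [hE, Finset.mem_filter] at hx'
    exact hx'.2 hx.2
  have hΨinj : Function.Injective Ψ := by
    rintro ⟨i, j⟩ ⟨i', j'⟩ h
    rcases i with i | i <;> rcases i' with i' | i'
    · have h' : eO (i, j) = eO (i', j') := Subtype.coe_injective h
      have := eO.injective h'
      simp only [Prod.mk.injEq] at this
      simp [this.1, this.2]
    · exact absurd (hΨE i' j') (h ▸ hOE _ (hΨO i j))
    · exact absurd (hΨO i' j') (fun hh => hOE _ hh (h ▸ hΨE i j))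
    · have h' : eE (i, j) = eE (i', j') := Subtype.coe_injective h
      have := eE.injective h'
      simp only [Prod.mk.injEq] at this
      simp [this.1, this.2]
  set a : Fin q₁ ⊕ Fin q₂ → Fin (m + t - 1) := fun i => Ψ (i, 0) with ha
  set b : Fin q₁ ⊕ Fin q₂ → Fin (m + t - 1) := fun i => Ψ (i, 1) with hb
  have hab : ∀ i, a i ≠ b i := by
    intro i h
    rw [ha, hb] at h
    have := hΨinj h
    simp at this
  have hmemW : ∀ x, x ∈ O ∨ x ∈ E → x ∈ W := by
    rintro x (hx | hx)
    · exact Finset.filter_subset _ _ hx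
    · exact Finset.filter_subset _ _ hx
  have haW : ∀ i, a i ∈ W := by
    rintro (i | i)
    · exact hmemW _ (Or.inl (hΨO i 0))
    · exact hmemW _ (Or.inr (hΨE i 0))
  have hbW : ∀ i, b i ∈ W := by
    rintro (i | i)
    · exact hmemW _ (Or.inl (hΨO i 1))
    · exact hmemW _ (Or.inr (hΨE i 1))
  have hpar : ∀ i, 2 ∣ ((c {v, a i}).val + (c {v, b i}).val) := by
    rintro (i | i)
    · have h1 := (Finset.mem_filter.1 (hΨO i 0)).2
      have h2 := (Finset.mem_filter.1 (hΨO i 1)).2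
      simp only [ha, hb]
      omega
    · have h1 := (Finset.mem_filter.1 (hΨE i 0)).2
      have h2 := (Finset.mem_filter.1 (hΨE i 1)).2
      simp only [ha, hb]
      omega
  set half : Fin q₁ ⊕ Fin q₂ → ℕ :=
    fun i => ((c {v, a i}).val + (c {v, b i}).val) / 2 with hhalf
  have hcardsum : k * s + (s - 1) ≤ (univ : Finset (Fin q₁ ⊕ Fin q₂)).card := by
    rw [card_univ, Fintype.card_sum, Fintype.card_fin, Fintype.card_fin]
    have hks : k * s = s * k := mul_comm _ _
    omega
  obtain ⟨K, _, hKcard, hKsum⟩ :=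
    ext_lemma k (univ : Finset (Fin q₁ ⊕ Fin q₂)) (fun i => ((half i : ℕ) : ZMod s)) hcardsum
  set F : Finset (Fin (m + t - 1)) := K.biUnion (fun i => {a i, b i}) with hF
  have hFW : F ⊆ W := by
    rw [hF]
    refine Finset.biUnion_subset.2 (fun i _ => ?_)
    intro x hx
    rcases Finset.mem_insert.1 hx with rfl | hx'
    · exact haW i
    · rw [Finset.mem_singleton.1 hx']; exact hbW i
  have hkey : ∀ i j (x y : Fin 2), Ψ (i, x) = Ψ (j, y) → i = j :=
    fun i j x y h => congrArg (fun p => p.1) (hΨinj h)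
  have hdisjP : ∀ i ∈ K, ∀ j ∈ K, i ≠ j →
      Disjoint ({a i, b i} : Finset (Fin (m + t - 1))) ({a j, b j} : Finset (Fin (m + t - 1))) := by
    intro i _ j _ hij
    rw [Finset.disjoint_left]
    intro x hx hy
    rw [Finset.mem_insert, Finset.mem_singleton] at hx hy
    apply hij
    rw [ha, hb] at hx hy
    rcases hx with rfl | rfl <;> rcases hy with h | h <;> exact hkey _ _ _ _ h
  have hFcard : F.card = m := by
    rw [hF, Finset.card_biUnion hdisjP]
    rw [Finset.sum_congr rfl (fun i _ => Finset.card_pair (hab i)), Finset.sum_const,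
      hKcard, smul_eq_mul]
    have hks : k * s = s * k := mul_comm _ _
    omega
  have hvalcast : ∀ x : ZMod t, ((x.val : ℕ) : ZMod t) = x := fun x => by
    rw [ZMod.natCast_val, ZMod.cast_id]
  have hterm : ∀ i, c {v, a i} + c {v, b i} = ((2 * half i : ℕ) : ZMod t) := by
    intro i
    have h2 : 2 * half i = (c {v, a i}).val + (c {v, b i}).val := by
      have := hpar i
      simp only [hhalf]
      omega
    rw [h2, Nat.cast_add, hvalcast, hvalcast]
  have hs_dvd : s ∣ ∑ i ∈ K, half i := by
    rw [← ZMod.natCast_eq_zero_iff, Nat.cast_sum]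
    exact hKsum
  have hsum0 : ∑ w ∈ F, c {v, w} = 0 := by
    rw [hF, Finset.sum_biUnion (fun i hi j hj hij => hdisjP i hi j hj hij)]
    rw [Finset.sum_congr rfl (fun i _ => by rw [Finset.sum_pair (hab i), hterm i])]
    rw [← Nat.cast_sum]
    rw [ZMod.natCast_eq_zero_iff]
    rw [← Finset.mul_sum]
    obtain ⟨x, hx⟩ := hs_dvd
    exact ⟨x, by rw [hx, hs]; ring⟩
  exact hno (star_of_subset c v F (fun hv => (Finset.mem_erase.1 (hFW hv)).1 rfl) hFcard hsum0)

lemma upper_even (m t : ℕ) (ht : 2 ≤ t) (htm : t ≤ m) (hdvd : t ∣ m) (hte : Even t)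
    (c : Finset (Fin (m + t - 1)) → ZMod t) :
    HasZeroSumStar (ZMod t) 2 m (m + t - 1) c := by
  by_contra hno
  have hA := claimA m t ht htm hdvd hte c hno
  set Φ := (univ : Finset (Fin (m + t - 1))).sigma
    (fun v => (univ.erase v).filter (fun w => (c {v, w}).val % 2 = 1)) with hΦ
  have hmemΦ : ∀ p : (_ : Fin (m + t - 1)) × Fin (m + t - 1),
      p ∈ Φ ↔ (p.2 ≠ p.1 ∧ (c {p.1, p.2}).val % 2 = 1) := by
    intro p
    rw [hΦ, Finset.mem_sigma, Finset.mem_filter, Finset.mem_erase]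
    simp only [Finset.mem_univ, true_and, and_true]
  have h1 : ((Φ.card : ℕ) : ZMod 2) = 1 := by
    rw [hΦ, Finset.card_sigma, Nat.cast_sum]
    have hterm : ∀ v ∈ (univ : Finset (Fin (m + t - 1))),
        ((((univ.erase v).filter (fun w => (c {v, w}).val % 2 = 1)).card : ℕ) : ZMod 2)
          = 1 := by
      intro v _
      rw [← ZMod.natCast_mod, hA v, Nat.cast_one]
    rw [Finset.sum_congr rfl hterm, Finset.sum_const, card_univ, Fintype.card_fin,
      nsmul_eq_mul, mul_one, ← ZMod.natCast_mod]
    obtain ⟨s, hs⟩ := hte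
    obtain ⟨k, hk⟩ := hdvd
    have hmod : (m + t - 1) % 2 = 1 := by
      have hm2 : m = 2 * (s * k) := by rw [hk, hs]; ring
      omega
    rw [hmod, Nat.cast_one]
  have h2 : ((Φ.card : ℕ) : ZMod 2) = 0 := by
    have hsum : ∑ _p ∈ Φ, (1 : ZMod 2) = 0 := by
      apply Finset.sum_involution (fun p _ => (⟨p.2, p.1⟩ : (_ : Fin (m + t - 1)) × Fin (m + t - 1)))
      · intro _ _; decide
      · intro p hp _ heq
        have h := (hmemΦ p).1 hp
        exact h.1 (congrArg Sigma.fst heq)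
      · intro p hp
        have h := (hmemΦ p).1 hp
        refine (hmemΦ _).2 ⟨h.1.symm, ?_⟩
        rw [Finset.pair_comm]
        exact h.2
      · intro p hp; rfl
    rw [Finset.sum_const, nsmul_eq_mul, mul_one] at hsum
    exact hsum
  rw [h1] at h2
  exact absurd h2 (by decide)

end ZeroSumStarProof

/-- Bialostocki–Dierker–Caro: the value of `R(K_{1,m}, Z_t)`. -/
theorem stmt_12 (m t R : ℕ) (ht : 2 ≤ t) (hmt : t ≤ m) (hdvd : t ∣ m)
    (hR : IsStarRamsey (ZMod t) 2 m R) :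
    (Even m ∧ Even t → R = m + t - 1) ∧ (¬ (Even m ∧ Even t) → R = m + t) := by
  by_cases hev : Even t
  · -- t even, so m even, R = m + t - 1
    have hme : Even m := by
      obtain ⟨u, hu⟩ := hev
      obtain ⟨k, hk⟩ := hdvd
      exact ⟨u * k, by rw [hk, hu]; ring⟩
    have hDeven : Even (m + t - 2) := by
      obtain ⟨u, hu⟩ := hev
      obtain ⟨w, hw⟩ := hme
      exact ⟨u + w - 1, by omega⟩
    have hmem : (m + t - 1) ∈ {d : ℕ | 0 < d ∧
        ∀ c : Finset (Fin d) → ZMod t, HasZeroSumStar (ZMod t) 2 m d c} :=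
      ⟨by omega, fun c => upper_even m t ht hmt hdvd hev c⟩
    have hlb : ∀ d ∈ {d : ℕ | 0 < d ∧
        ∀ c : Finset (Fin d) → ZMod t, HasZeroSumStar (ZMod t) 2 m d c}, m + t - 1 ≤ d := by
      intro d hd
      by_contra hlt
      obtain ⟨C, hsym, h0, hcard⟩ := conn_exists t (m + t - 2) ht (by omega) (Or.inr hDeven)
      obtain ⟨c0, hc0⟩ := noStar_of_connection m t (m + t - 2) ht (by omega) (by omega) hmt
        C hsym h0 hcard
      obtain ⟨c1, hc1⟩ := push 2 m (show d ≤ m + t - 2 by omega) c0 hc0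
      exact hc1 (hd.2 c1)
    have hR1 : R = m + t - 1 := hR.unique ⟨hmem, hlb⟩
    exact ⟨fun _ => hR1, fun hcon => absurd ⟨hme, hev⟩ hcon⟩
  · -- t odd, R = m + t
    have hmem : (m + t) ∈ {d : ℕ | 0 < d ∧
        ∀ c : Finset (Fin d) → ZMod t, HasZeroSumStar (ZMod t) 2 m d c} :=
      ⟨by omega, fun c => upper_any m t ht hdvd (m + t) le_rfl c⟩
    have hlb : ∀ d ∈ {d : ℕ | 0 < d ∧
        ∀ c : Finset (Fin d) → ZMod t, HasZeroSumStar (ZMod t) 2 m d c}, m + t ≤ d := by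
      intro d hd
      by_contra hlt
      obtain ⟨C, hsym, h0, hcard⟩ := conn_exists t (m + t - 1) ht (by omega) (Or.inl hev)
      obtain ⟨c0, hc0⟩ := noStar_of_connection m t (m + t - 1) ht (by omega) (by omega) hmt
        C hsym h0 hcard
      obtain ⟨c1, hc1⟩ := push 2 m (show d ≤ m + t - 1 by omega) c0 hc0
      exact hc1 (hd.2 c1)
    have hR1 : R = m + t := hR.unique ⟨hmem, hlb⟩
    exact ⟨fun hcon => absurd hcon.2 hev, fun _ => hR1⟩
end

section
/- Let G be a finite abelian group and let r > q ≥ 0 and m ≥ |G| be integers with exp(G) | m. Then for every p with 0 ≤ p ≤ q, R(S(r,q,m), G) ≤ p + R(S(r-p, q-p, m), G). -/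
open Finset

/-- `R(S(r,q,m), G) ≤ p + R(S(r-p, q-p, m), G)` for `0 ≤ p ≤ q`. -/
theorem stmt_14 (G : Type*) [AddCommGroup G] [Fintype G] (r q p m R1 R2 : ℕ)
    (hq : q < r) (hp : p ≤ q) (hm : Fintype.card G ≤ m)
    (hexp : AddMonoid.exponent G ∣ m)
    (hR1 : IsDeltaRamsey G r q m R1)
    (hR2 : IsDeltaRamsey G (r - p) (q - p) m R2) :
    R1 ≤ p + R2 := by
  obtain ⟨⟨hR2pos, hR2prop⟩, -⟩ := hR2
  apply hR1.2
  refine ⟨by omega, fun c => ?_⟩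
  -- embeddings
  set J : Fin R2 ↪ Fin (p + R2) :=
    ⟨Fin.natAdd p, fun a b h => by
      simpa [Fin.natAdd, Fin.ext_iff] using h⟩ with hJ
  set A : Finset (Fin (p + R2)) :=
    Finset.univ.map ⟨Fin.castAdd R2, fun a b h => by
      simpa [Fin.castAdd, Fin.ext_iff, Fin.castLE] using h⟩ with hA
  have hAcard : A.card = p := by simp [hA]
  have hdisj : ∀ e : Finset (Fin R2), Disjoint (e.map J) A := by
    intro e
    rw [Finset.disjoint_left]
    rintro x hx hxA
    simp only [hA, Finset.mem_map, Finset.mem_univ, true_and] at hxA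
    obtain ⟨a, ha⟩ := hxA
    simp only [hJ, Finset.mem_map, Function.Embedding.coeFn_mk] at hx
    obtain ⟨b, -, hb⟩ := hx
    have h1 : x.val = p + b.val := by rw [← hb]; rfl
    have h2 : x.val = a.val := by rw [← ha]; rfl
    have := a.isLt
    omega
  set φ : Finset (Fin R2) → Finset (Fin (p + R2)) := fun e => e.map J ∪ A with hφ
  have hφcard : ∀ e : Finset (Fin R2), (φ e).card = e.card + p := by
    intro e
    rw [hφ]
    simp only
    rw [Finset.card_union_of_disjoint (hdisj e), Finset.card_map, hAcard]
  have hφinj : Function.Injective φ := by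
    intro e f h
    have he : (φ e) \ A = e.map J := Finset.union_sdiff_cancel_right (hdisj e)
    have hf : (φ f) \ A = f.map J := Finset.union_sdiff_cancel_right (hdisj f)
    have : e.map J = f.map J := by rw [← he, ← hf, h]
    exact Finset.map_injective J this
  have hφint : ∀ e f : Finset (Fin R2), φ e ∩ φ f = (e ∩ f).map J ∪ A := by
    intro e f
    rw [hφ]
    simp only
    rw [Finset.map_inter, ← Finset.inter_union_distrib_right]
  obtain ⟨Q', hQ'card, F', hF'card, hcards, hint, hsum⟩ :=
    hR2prop (fun e => c (φ e))
  refine ⟨φ Q', ?_, F'.image φ, ?_, ?_, ?_, ?_⟩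
  · rw [hφcard, hQ'card]; omega
  · rw [Finset.card_image_of_injective _ hφinj, hF'card]
  · intro e he
    simp only [Finset.mem_image] at he
    obtain ⟨e', he', rfl⟩ := he
    rw [hφcard, (hcards e' he')]
    omega
  · intro e he f hf hne
    simp only [Finset.mem_image] at he hf
    obtain ⟨e', he', rfl⟩ := he
    obtain ⟨f', hf', rfl⟩ := hf
    have hne' : e' ≠ f' := fun h => hne (by rw [h])
    rw [hφint, hint e' he' f' hf' hne']
  · rw [Finset.sum_image (fun x _ y _ h => hφinj h)]
    exact hsum
end

section
/- Let G be a finite abelian group and let r > q ≥ 0 and m ≥ |G| be integers with exp(G) | m. Then R(S(r,q,m), G) ≥ (r-q)·m + max(q, D(G)-1). -/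
open Finset

private lemma davenport_le_card (G : Type*) [AddCommGroup G] [Fintype G] {D : ℕ}
    (hD : IsLeast {d : ℕ | 0 < d ∧ ∀ S : Multiset G, Multiset.card S = d →
      ∃ T, T ≤ S ∧ T ≠ 0 ∧ T.sum = 0} D) : D ≤ Fintype.card G := by
  apply hD.2
  refine ⟨Fintype.card_pos, ?_⟩
  intro S hS
  induction S using Quotient.inductionOn with
  | _ l =>
    have hlen : l.length = Fintype.card G := by simpa using hS
    have key : ∀ i j : Fin (Fintype.card G + 1), (i : ℕ) < (j : ℕ) →
        (l.take (i : ℕ)).sum = (l.take (j : ℕ)).sum →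
        ∃ T, T ≤ (↑l : Multiset G) ∧ T ≠ 0 ∧ T.sum = 0 := by
      intro i j hij hfeq
      refine ⟨↑((l.drop (i : ℕ)).take ((j : ℕ) - (i : ℕ))), ?_, ?_, ?_⟩
      · exact Multiset.coe_le.mpr
          (((List.take_sublist _ _).trans (List.drop_sublist _ _)).subperm)
      · have hj : (j : ℕ) ≤ l.length := by omega
        have : ((l.drop (i : ℕ)).take ((j : ℕ) - (i : ℕ))).length = (j : ℕ) - (i : ℕ) := by
          simp only [List.length_take, List.length_drop]
          omega
        intro h
        rw [Multiset.coe_eq_zero] at h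
        rw [h] at this
        simp at this
        omega
      · have hsplit : l.take (j : ℕ) = l.take (i : ℕ) ++ (l.drop (i : ℕ)).take ((j : ℕ) - (i : ℕ)) := by
          have h1 : (j : ℕ) = (i : ℕ) + ((j : ℕ) - (i : ℕ)) := by omega
          conv_lhs => rw [h1]
          rw [List.take_add]
        rw [hsplit, List.sum_append] at hfeq
        have := hfeq.symm
        rw [Multiset.sum_coe]
        exact (add_left_cancel (a := (l.take (i:ℕ)).sum) (by rw [add_zero]; exact this.symm)).symm
    obtain ⟨i, j, hij, hfeq⟩ := Fintype.exists_ne_map_eq_of_card_lt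
      (fun i : Fin (Fintype.card G + 1) => (l.take (i : ℕ)).sum) (by simp)
    rcases lt_or_gt_of_ne (fun h => hij (by exact_mod_cast Fin.ext h)) with h | h
    · exact key i j h hfeq
    · exact key j i h hfeq.symm

private lemma petal_card {d r q : ℕ} (Q : Finset (Fin d)) (hQ : Q.card = q)
    (F : Finset (Finset (Fin d))) (hr : ∀ e ∈ F, e.card = r)
    (hQe : ∀ e ∈ F, Q ⊆ e)
    (hdisj : ∀ e ∈ F, ∀ f ∈ F, e ≠ f → Disjoint (e \ Q) (f \ Q)) :
    (F.biUnion fun e => e \ Q).card = F.card * (r - q) := by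
  rw [Finset.card_biUnion hdisj]
  rw [Finset.sum_congr rfl (fun e he => ?_), Finset.sum_const, smul_eq_mul]
  rw [Finset.card_sdiff_of_subset (hQe e he), hr e he, hQ]

private lemma petal_disjoint {d : ℕ} (Q : Finset (Fin d))
    (F : Finset (Finset (Fin d)))
    (hint : ∀ e ∈ F, ∀ f ∈ F, e ≠ f → e ∩ f = Q) :
    ∀ e ∈ F, ∀ f ∈ F, e ≠ f → Disjoint (e \ Q) (f \ Q) := by
  intro e he f hf hef
  refine Finset.disjoint_left.mpr fun x hxe hxf => ?_
  have hx : x ∈ e ∩ f := Finset.mem_inter.mpr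
    ⟨(Finset.mem_sdiff.mp hxe).1, (Finset.mem_sdiff.mp hxf).1⟩
  rw [hint e he f hf hef] at hx
  exact (Finset.mem_sdiff.mp hxe).2 hx

private lemma core_subset {d m : ℕ} (Q : Finset (Fin d))
    (F : Finset (Finset (Fin d))) (hF : F.card = m) (hm2 : 2 ≤ m)
    (hint : ∀ e ∈ F, ∀ f ∈ F, e ≠ f → e ∩ f = Q) :
    ∀ e ∈ F, Q ⊆ e := by
  intro e he
  obtain ⟨f, hf, hfe⟩ := Finset.exists_mem_ne (by rw [hF]; omega) e
  rw [← hint e he f hf (Ne.symm hfe)]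
  exact Finset.inter_subset_left

private lemma union_bound {d r q m : ℕ} (hq : q < r) (hm : 1 ≤ m)
    (Q : Finset (Fin d)) (hQ : Q.card = q)
    (F : Finset (Finset (Fin d))) (hF : F.card = m)
    (hr : ∀ e ∈ F, e.card = r)
    (hint : ∀ e ∈ F, ∀ f ∈ F, e ≠ f → e ∩ f = Q) :
    q + m * (r - q) ≤ d := by
  rcases eq_or_lt_of_le hm with h1 | h2
  · subst hF
    obtain ⟨e, he⟩ := Finset.card_eq_one.mp h1.symm
    have h3 : e.card ≤ d := by
      simpa using Finset.card_le_univ e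
    have h4 := hr e (by simp [he])
    rw [← h1]
    omega
  · have hm2 : 2 ≤ m := h2
    have hQe := core_subset Q F hF hm2 hint
    have hpd := petal_disjoint Q F hint
    have hP := petal_card Q hQ F hr hQe hpd
    have hdisj : Disjoint Q (F.biUnion fun e => e \ Q) := by
      refine Finset.disjoint_right.mpr fun x hx => ?_
      obtain ⟨e, he, hxe⟩ := Finset.mem_biUnion.mp hx
      exact fun hxQ => (Finset.mem_sdiff.mp hxe).2 hxQ
    have hcu := Finset.card_union_of_disjoint hdisj
    have hle : (Q ∪ F.biUnion fun e => e \ Q).card ≤ d := by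
      simpa using Finset.card_le_univ (Q ∪ F.biUnion fun e => e \ Q)
    rw [hcu, hP, hF, hQ] at hle
    exact hle

/-- `R(S(r,q,m), G) ≥ (r-q)·m + max(q, D(G)-1)`. -/
theorem stmt_15 (G : Type*) [AddCommGroup G] [Fintype G] (r q m D R : ℕ)
    (hq : q < r) (hm : Fintype.card G ≤ m) (hexp : AddMonoid.exponent G ∣ m)
    (hD : IsDavenport G D) (hR : IsDeltaRamsey G r q m R) :
    (r - q) * m + max q (D - 1) ≤ R := by
  obtain ⟨⟨hR0, hRall⟩, -⟩ := hR
  have hm1 : 1 ≤ m := le_trans Fintype.card_pos hm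
  have hcount : q + m * (r - q) ≤ R := by
    obtain ⟨Q, hQ, F, hF, hr, hint, -⟩ := hRall (fun _ => 0)
    exact union_bound hq hm1 Q hQ F hF hr hint
  have hmc : (r - q) * m = m * (r - q) := mul_comm _ _
  rcases le_or_gt (D - 1) q with hcase | hcase
  · rw [max_eq_left hcase]; omega
  · by_contra hcon
    push_neg at hcon
    rw [max_eq_right hcase.le] at hcon
    have hD2 : 2 ≤ D := by omega
    -- G is nontrivial
    have hG2 : 2 ≤ Fintype.card G := by
      by_contra hG
      have hG1 : Fintype.card G = 1 := by
        have := Fintype.card_pos (α := G); omega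
      have hsub : Subsingleton G := Fintype.card_le_one_iff_subsingleton.mp (by omega)
      have h1 : 1 ∈ {d : ℕ | 0 < d ∧ ∀ S : Multiset G, Multiset.card S = d →
          ∃ T, T ≤ S ∧ T ≠ 0 ∧ T.sum = 0} := by
        refine ⟨one_pos, fun S hS => ⟨S, le_refl S, ?_, Subsingleton.elim _ _⟩⟩
        intro h0
        rw [h0] at hS
        simp at hS
      have := hD.2 h1
      omega
    have hm2 : 2 ≤ m := le_trans hG2 hm
    have hDle : D ≤ Fintype.card G := davenport_le_card G hD
    -- zero-sum-free sequence of length D - 1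
    have hfree : ∃ S : Multiset G, Multiset.card S = D - 1 ∧
        ∀ T, T ≤ S → T ≠ 0 → T.sum ≠ 0 := by
      by_contra hno
      push_neg at hno
      have hmem : (D - 1) ∈ {d : ℕ | 0 < d ∧ ∀ S : Multiset G, Multiset.card S = d →
          ∃ T, T ≤ S ∧ T ≠ 0 ∧ T.sum = 0} := by
        refine ⟨by omega, fun S hS => ?_⟩
        obtain ⟨T, hT1, hT2, hT3⟩ := hno S hS
        exact ⟨T, hT1, hT2, hT3⟩
      have := hD.2 hmem
      omega
    obtain ⟨S, hScard, hSfree⟩ := hfree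
    induction S using Quotient.inductionOn with
    | _ l =>
    have hlen : l.length = D - 1 := by simpa using hScard
    have hNR : l.length ≤ R := by
      have h1 : m ≤ m * (r - q) := Nat.le_mul_of_pos_right m (by omega)
      omega
    -- the weighting
    set g : Fin R → G := fun v => if h : (v : ℕ) < l.length then l.get ⟨v, h⟩ else 0 with hg
    obtain ⟨Q, hQ, F, hF, hr, hint, hsum⟩ := hRall (fun e => ∑ v ∈ e, g v)
    have hQe := core_subset Q F hF hm2 hint
    have hpd := petal_disjoint Q F hint
    set P : Finset (Fin R) := F.biUnion (fun e => e \ Q) with hPdef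
    have hPcard : P.card = m * (r - q) := by
      rw [hPdef, petal_card Q hQ F hr hQe hpd, hF]
    -- split the sum
    have hsplit : ∑ e ∈ F, ∑ v ∈ e, g v
        = m • (∑ v ∈ Q, g v) + ∑ e ∈ F, ∑ v ∈ e \ Q, g v := by
      rw [Finset.sum_congr rfl (fun e he => (Finset.sum_sdiff (hQe e he)).symm)]
      rw [Finset.sum_add_distrib, Finset.sum_const, hF, add_comm]
    have hms : m • (∑ v ∈ Q, g v) = 0 := by
      obtain ⟨k, hk⟩ := hexp
      rw [hk, mul_comm, mul_nsmul, AddMonoid.exponent_nsmul_eq_zero]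
    have hPsum : ∑ v ∈ P, g v = 0 := by
      have hbi : ∑ v ∈ P, g v = ∑ e ∈ F, ∑ v ∈ e \ Q, g v := by
        rw [hPdef]
        exact Finset.sum_biUnion (fun e he f hf hef =>
          hpd e (Finset.mem_coe.mp he) f (Finset.mem_coe.mp hf) hef)
      rw [hbi]
      have := hsum
      rw [hsplit, hms, zero_add] at this
      exact this
    -- the special vertices
    set emb : Fin l.length ↪ Fin R :=
      ⟨fun i => ⟨i.1, lt_of_lt_of_le i.2 hNR⟩,
        by intro a b hab; simp only [Fin.mk.injEq] at hab; exact Fin.ext hab⟩ with hemb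
    set W : Finset (Fin R) := Finset.univ.map emb with hW
    have hWcard : W.card = l.length := by simp [hW]
    have hWmem : ∀ v : Fin R, v ∈ W ↔ (v : ℕ) < l.length := by
      intro v
      constructor
      · intro hv
        obtain ⟨i, -, hi⟩ := Finset.mem_map.mp hv
        rw [← hi]
        exact i.2
      · intro hv
        exact Finset.mem_map.mpr ⟨⟨v, hv⟩, Finset.mem_univ _, Fin.ext rfl⟩
    have hgW : ∀ v : Fin R, v ∉ W → g v = 0 := by
      intro v hv
      rw [hg]
      exact dif_neg (fun h => hv ((hWmem v).mpr h))
    have hWval : Multiset.map g W.val = (↑l : Multiset G) := by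
      rw [hW, Finset.map_val, Multiset.map_map]
      have hcomp : (g ∘ emb) = fun i : Fin l.length => l.get i := by
        funext i
        simp [hg, hemb]
        exact dif_pos i.2
      rw [hcomp, Fin.univ_val_map, List.ofFn_get]
    -- W ∩ P is nonempty
    have hWPcard : 1 ≤ (W ∩ P).card := by
      have h1 : (W ∪ P).card ≤ R := by
        simpa using Finset.card_le_univ (W ∪ P)
      have h2 := Finset.card_inter_add_card_union W P
      omega
    -- the sub-multiset
    set T : Multiset G := Multiset.map g (W ∩ P).val with hT
    have hTle : T ≤ (↑l : Multiset G) := by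
      rw [hT, ← hWval]
      exact Multiset.map_le_map (Finset.val_le_iff.mpr Finset.inter_subset_left)
    have hTne : T ≠ 0 := by
      intro h0
      have : Multiset.card T = 0 := by rw [h0]; simp
      rw [hT, Multiset.card_map] at this
      have : (W ∩ P).card = 0 := this
      omega
    have hTsum : T.sum = 0 := by
      have h1 : T.sum = ∑ v ∈ W ∩ P, g v := rfl
      have h2 : ∑ v ∈ P ∩ W, g v + ∑ v ∈ P \ W, g v = ∑ v ∈ P, g v :=
        Finset.sum_inter_add_sum_sdiff P W g
      have h3 : ∑ v ∈ P \ W, g v = 0 :=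
        Finset.sum_eq_zero (fun v hv => hgW v (Finset.mem_sdiff.mp hv).2)
      rw [h1, Finset.inter_comm]
      rw [h3, add_zero] at h2
      rw [h2, hPsum]
    exact hSfree T hTle hTne hTsum
end

section
/- Let G be a finite abelian group, let (g_1, ..., g_{D(G)-1}) be a zero-sum free sequence in G, and let n = (r-q)·m + D(G) - 2 where r > q ≥ 0, m ≥ |G|, exp(G) | m. Define a vertex weighting f on an n-element vertex set V which takes the values g_1, ..., g_{D(G)-1} on D(G)-1 distinguished vertices and 0 elsewhere, and color each r-subset e by c(e) = Σ_{v ∈ e} f(v). Then no delta-system of type S(r,q,m) in the complete r-uniform hypergraph on V has zero color sum. -/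
open Finset

/-- The explicit vertex-weight coloring on `(r-q)·m + D - 2` vertices admits no
zero-sum delta-system of type `S(r,q,m)`. -/
theorem stmt_16 (G : Type*) [AddCommGroup G] [Fintype G] (r q m D n : ℕ)
    (hq : q < r) (hm : Fintype.card G ≤ m) (hexp : AddMonoid.exponent G ∣ m)
    (hD : IsDavenport G D) (hn : n = (r - q) * m + D - 2)
    (g : Fin (D - 1) → G)
    (hg : ∀ T : Finset (Fin (D - 1)), T.Nonempty → ∑ i ∈ T, g i ≠ 0)
    (ι : Fin (D - 1) → Fin n) (hι : Function.Injective ι)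
    (f : Fin n → G) (hfg : ∀ i, f (ι i) = g i)
    (hf0 : ∀ v, v ∉ Set.range ι → f v = 0) :
    ¬ HasZeroSumDelta G r q m n (fun e => ∑ v ∈ e, f v) := by
  rintro ⟨Q, hQ, F, hF, hcard, hint, hsum⟩
  have hm1 : 1 ≤ m := le_trans Fintype.card_pos hm
  have hD1 : 1 ≤ D := hD.1.1
  rcases eq_or_lt_of_le hm1 with hm2 | hm2
  · -- m = 1, so G is trivial and D = 1; then n < r and no r-set exists
    have hG1 : Fintype.card G = 1 := le_antisymm (hm2 ▸ hm) Fintype.card_pos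
    have : Subsingleton G := Fintype.card_le_one_iff_subsingleton.mp hG1.le
    have hDle : D ≤ 1 := hD.2 ⟨Nat.one_pos, fun S hS => ⟨S, le_rfl, by
      intro h; rw [h] at hS; simp at hS, Subsingleton.elim _ _⟩⟩
    have hD1' : D = 1 := le_antisymm hDle hD1
    obtain ⟨e, he⟩ : F.Nonempty := Finset.card_pos.mp (by omega)
    have her : e.card = r := hcard e he
    have hen : e.card ≤ n := by
      simpa using Finset.card_le_univ e
    rw [← hm2, mul_one] at hn
    omega
  · -- m ≥ 2
    have hQsub : ∀ e ∈ F, Q ⊆ e := by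
      intro e he
      obtain ⟨e', he', hne⟩ := Finset.exists_mem_ne (hF ▸ hm2) e
      rw [← hint e' he' e he hne]
      exact Finset.inter_subset_right
    have hdisj : (F : Set (Finset (Fin n))).PairwiseDisjoint (fun e => e \ Q) := by
      intro e he f' hf' hne
      simp only [Finset.disjoint_left]
      intro a ha ha'
      have : a ∈ e ∩ f' := Finset.mem_inter.mpr ⟨(Finset.mem_sdiff.mp ha).1,
        (Finset.mem_sdiff.mp ha').1⟩
      rw [hint e he f' hf' hne] at this
      exact (Finset.mem_sdiff.mp ha).2 this
    set U : Finset (Fin n) := F.biUnion (fun e => e \ Q) with hU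
    have hUcard : U.card = m * (r - q) := by
      rw [hU, Finset.card_biUnion hdisj]
      rw [Finset.sum_congr rfl (fun e he => by
        rw [Finset.card_sdiff_of_subset (hQsub e he), hcard e he, hQ])]
      simp [hF, mul_comm]
    -- some ι i lies in U
    have hex : ∃ i, ι i ∈ U := by
      by_contra hno
      push_neg at hno
      have hsub : U ⊆ Finset.univ \ Finset.univ.image ι := by
        intro v hv
        simp only [Finset.mem_sdiff, Finset.mem_univ, true_and, Finset.mem_image]
        rintro ⟨i, -, rfl⟩
        exact hno i hv
      have := Finset.card_le_card hsub
      rw [Finset.card_sdiff_of_subset (Finset.subset_univ _),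
        Finset.card_image_of_injective _ hι, hUcard] at this
      simp only [Finset.card_univ, Fintype.card_fin] at this
      have : m * (r - q) ≤ n - (D - 1) := this
      have hrq1 : 1 ≤ r - q := by omega
      have : 2 ≤ m * (r - q) := le_trans hm2 (Nat.le_mul_of_pos_right m hrq1)
      have hc : (r - q) * m = m * (r - q) := Nat.mul_comm _ _
      omega
    set T : Finset (Fin (D - 1)) := Finset.univ.filter (fun i => ι i ∈ U) with hT
    have hTne : T.Nonempty := by
      obtain ⟨i, hi⟩ := hex
      exact ⟨i, by simp [hT, hi]⟩
    -- compute the color sum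
    have hsplit : ∀ e ∈ F, ∑ v ∈ e, f v = (∑ v ∈ Q, f v) + ∑ v ∈ e \ Q, f v := by
      intro e he
      rw [add_comm, Finset.sum_sdiff (hQsub e he)]
    have h1 : ∑ e ∈ F, (fun e => ∑ v ∈ e, f v) e
        = m • (∑ v ∈ Q, f v) + ∑ v ∈ U, f v := by
      rw [Finset.sum_congr rfl hsplit, Finset.sum_add_distrib,
        Finset.sum_const, hF, hU, Finset.sum_biUnion hdisj]
    have hzero : m • (∑ v ∈ Q, f v) = 0 :=
      AddMonoid.exponent_dvd_iff_forall_nsmul_eq_zero.mp hexp _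
    have himg : T.image ι ⊆ U := by
      intro v hv
      obtain ⟨i, hi, rfl⟩ := Finset.mem_image.mp hv
      exact (Finset.mem_filter.mp hi).2
    have h2 : ∑ v ∈ U, f v = ∑ i ∈ T, g i := by
      rw [← Finset.sum_subset himg (fun v hvU hv => by
        refine hf0 v ?_
        rintro ⟨i, rfl⟩
        exact hv (Finset.mem_image.mpr ⟨i, Finset.mem_filter.mpr ⟨Finset.mem_univ i, hvU⟩, rfl⟩)),
        Finset.sum_image (fun a _ b _ h => hι h)]
      exact Finset.sum_congr rfl (fun i _ => hfg i)
    rw [h1, hzero, zero_add, h2] at hsum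
    exact hg T hTne hsum
end

section
/- Let G be a finite abelian group, r ≥ 2, and let m be a positive multiple of exp(G). Suppose r > (Ω(s_m(G)) - 1)/2, where Ω(s_m(G)) is the least n with C(n-1, r-1) ≥ s_m(G). Then R(I_m^{(r)}, G) = Ω(s_m(G)) - 1 if C(Ω(s_m(G)) - 1, r) ≥ s_m(G), and R(I_m^{(r)}, G) = Ω(s_m(G)) otherwise. -/
open Finset

lemma aux_exists_le_card {α : Type*} (S : Multiset α) (k : ℕ) (h : k ≤ Multiset.card S) :
    ∃ T, T ≤ S ∧ Multiset.card T = k := by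
  refine ⟨(S.toList.take k : List α), ?_, ?_⟩
  · calc ((S.toList.take k : List α) : Multiset α) ≤ (S.toList : Multiset α) := by
          exact Multiset.coe_le.mpr (S.toList.take_sublist k).subperm
      _ = S := S.coe_toList
  · simp [List.length_take]
    omega

lemma aux_pullback {α β : Type*} {f : α → β} {T : Multiset β} {S : Multiset α}
    (h : T ≤ S.map f) : ∃ S', S' ≤ S ∧ S'.map f = T := by
  induction T using Multiset.induction generalizing S with
  | empty => exact ⟨0, zero_le, rfl⟩
  | cons b T' ih =>
    have hb : b ∈ S.map f := Multiset.mem_of_le h (Multiset.mem_cons_self _ _)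
    obtain ⟨a, haS, hab⟩ := Multiset.mem_map.mp hb
    obtain ⟨S₀, rfl⟩ := Multiset.exists_cons_of_mem haS
    rw [Multiset.map_cons, hab] at h
    obtain ⟨S₁, hS₁, hS₁map⟩ := ih ((Multiset.cons_le_cons_iff b).mp h)
    exact ⟨a ::ₘ S₁, Multiset.cons_le_cons a hS₁, by rw [Multiset.map_cons, hab, hS₁map]⟩

lemma aux_assign {α β : Type*} [DecidableEq α] [Nonempty β] (E : Finset α) (B : Multiset β)
    (h : Multiset.card B = E.card) : ∃ c : α → β, E.val.map c = B := by
  induction E using Finset.induction generalizing B with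
  | empty => exact ⟨fun _ => Classical.arbitrary β, by simpa using (Multiset.card_eq_zero.mp (by simpa using h)).symm ▸ rfl⟩
  | insert a E ha ih =>
    have hB : B ≠ 0 := by
      intro h0; rw [h0] at h; simp [Finset.card_insert_of_notMem ha] at h
    obtain ⟨b, hb⟩ := Multiset.exists_mem_of_ne_zero hB
    obtain ⟨B', rfl⟩ := Multiset.exists_cons_of_mem hb
    obtain ⟨c, hc⟩ := ih B' (by simp [Finset.card_insert_of_notMem ha] at h; omega)
    refine ⟨Function.update c a b, ?_⟩
    rw [Finset.insert_val, Multiset.ndinsert_of_notMem ha, Multiset.map_cons,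
      Function.update_self]
    congr 1
    rw [← hc]
    exact Multiset.map_congr rfl fun x hx => Function.update_of_ne (by rintro rfl; exact ha hx) _ _


/-- When `r > (Ω(s_m(G)) - 1)/2`, the value of `R(I_m^{(r)}, G)` is determined by
whether `C(Ω(s_m(G)) - 1, r) ≥ s_m(G)`. -/
theorem stmt_18 (G : Type*) [AddCommGroup G] [Fintype G] (r m s n RI : ℕ)
    (hr : 2 ≤ r) (hm : 0 < m) (hexp : AddMonoid.exponent G ∣ m)
    (hs : IsEGZConst G m s)
    (hn : IsLeast {n : ℕ | 0 < n ∧ s ≤ (n - 1).choose (r - 1)} n)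
    (h2r : n - 1 < 2 * r)
    (hRI : IsIntRamsey G r m RI) :
    (s ≤ (n - 1).choose r → RI = n - 1) ∧ (¬ s ≤ (n - 1).choose r → RI = n) := by
  have hs_pos : 0 < s := hs.1.1
  -- n ≥ 2
  have hn2 : 2 ≤ n := by
    rcases hn.1 with ⟨hn0, hns⟩
    by_contra h
    interval_cases n
    rw [Nat.choose_eq_zero_of_lt (by omega)] at hns
    omega
  -- monotone version of EGZ property
  have hs_mono : ∀ S : Multiset G, s ≤ Multiset.card S →
      ∃ T, T ≤ S ∧ Multiset.card T = m ∧ T.sum = 0 := by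
    intro S hS
    obtain ⟨T, hTS, hTcard⟩ := aux_exists_le_card S s hS
    obtain ⟨U, hUT, hU⟩ := hs.1.2 T hTcard
    exact ⟨U, hUT.trans hTS, hU⟩
  -- bad sequence of length s - 1
  have hs_bad : ∃ B : Multiset G, Multiset.card B = s - 1 ∧
      ∀ T, T ≤ B → Multiset.card T = m → T.sum ≠ 0 := by
    rcases Nat.eq_or_lt_of_le hs_pos with h1 | h1
    · refine ⟨0, by rw [Multiset.card_zero]; omega, fun T hT hTm => ?_⟩
      rw [Multiset.le_zero] at hT
      subst hT; rw [Multiset.card_zero] at hTm; omega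
    · have hne : s - 1 ∉ {d : ℕ | 0 < d ∧ ∀ S : Multiset G, Multiset.card S = d →
          ∃ T, T ≤ S ∧ Multiset.card T = m ∧ T.sum = 0} := by
        intro hmem
        exact absurd (hs.2 hmem) (by omega)
      simp only [Set.mem_setOf_eq, not_and, not_forall] at hne
      obtain ⟨B, hBcard, hB⟩ := hne (by omega)
      refine ⟨B, hBcard, fun T hT hTm hT0 => hB ⟨T, hT, hTm, hT0⟩⟩
  -- upper bound tool: a large family of edges yields a zero-sum subfamily
  have key : ∀ d : ℕ, ∀ E : Finset (Finset (Fin d)), s ≤ E.card →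
      ∀ c : Finset (Fin d) → G, ∃ F, F ⊆ E ∧ F.card = m ∧ ∑ e ∈ F, c e = 0 := by
    intro d E hE c
    obtain ⟨T, hTle, hTm, hT0⟩ := hs_mono (E.val.map c) (by simpa using hE)
    obtain ⟨S', hS'le, hS'map⟩ := aux_pullback hTle
    refine ⟨⟨S', Multiset.nodup_of_le hS'le E.nodup⟩, ?_, ?_, ?_⟩
    · exact Finset.val_le_iff.mp hS'le
    · show Multiset.card S' = m
      rw [← hTm, ← hS'map, Multiset.card_map]
    · show (S'.map c).sum = 0
      rw [hS'map]; exact hT0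
  -- lower bound tool: few edges yields a bad coloring
  have bad : ∀ d : ℕ, d.choose r < s →
      ∃ c : Finset (Fin d) → G, ¬ HasZeroSumIntersecting G r m d c := by
    intro d hd
    obtain ⟨B, hBcard, hB⟩ := hs_bad
    set E : Finset (Finset (Fin d)) := Finset.powersetCard r Finset.univ with hE
    have hEcard : E.card = d.choose r := by
      rw [hE, Finset.card_powersetCard, Finset.card_univ, Fintype.card_fin]
    obtain ⟨B', hB'le, hB'card⟩ := aux_exists_le_card B E.card (by omega)
    obtain ⟨c, hc⟩ := aux_assign E B' hB'card
    refine ⟨c, ?_⟩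
    rintro ⟨F, hFm, hFr, -, hF0⟩
    have hFE : F ⊆ E := fun e he =>
      Finset.mem_powersetCard.mpr ⟨Finset.subset_univ e, hFr e he⟩
    have hle : F.val.map c ≤ B' := by
      rw [← hc]
      exact Multiset.map_le_map (Finset.val_le_iff.mpr hFE)
    exact hB (F.val.map c) (hle.trans hB'le) (by simpa using hFm) hF0
  constructor
  · -- Case 1: s ≤ C(n-1, r), RI = n - 1
    intro hcase
    refine hRI.unique ⟨⟨by omega, ?_⟩, ?_⟩
    · intro c
      set E : Finset (Finset (Fin (n - 1))) := Finset.powersetCard r Finset.univ with hE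
      have hEcard : s ≤ E.card := by
        rw [hE, Finset.card_powersetCard, Finset.card_univ, Fintype.card_fin]
        exact hcase
      obtain ⟨F, hFE, hFm, hF0⟩ := key (n - 1) E hEcard c
      refine ⟨F, hFm, fun e he => (Finset.mem_powersetCard.mp (hFE he)).2, ?_, hF0⟩
      intro e he f hf
      have hec := (Finset.mem_powersetCard.mp (hFE he)).2
      have hfc := (Finset.mem_powersetCard.mp (hFE hf)).2
      rw [← Finset.card_pos]
      have h1 : (e ∩ f).card + (e ∪ f).card = e.card + f.card :=
        Finset.card_inter_add_card_union e f
      have h2 : (e ∪ f).card ≤ n - 1 := by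
        calc (e ∪ f).card ≤ (Finset.univ : Finset (Fin (n - 1))).card :=
              Finset.card_le_card (Finset.subset_univ _)
          _ = n - 1 := by simp
      omega
    · -- lower bound: every member d satisfies n - 1 ≤ d
      intro d hd
      by_contra hlt
      push_neg at hlt
      have hdn : d ≤ n - 2 := by omega
      -- s > C(n-2, r-1) from minimality of n
      have hmin : ¬ s ≤ (n - 2).choose (r - 1) := by
        intro h
        have : n - 1 ∈ {k : ℕ | 0 < k ∧ s ≤ (k - 1).choose (r - 1)} := by
          refine ⟨by omega, ?_⟩
          have : n - 1 - 1 = n - 2 := by omega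
          rw [this]; exact h
        exact absurd (hn.2 this) (by omega)
      -- C(n-2, r) ≤ C(n-2, r-1)
      have hcc : (n - 2).choose r ≤ (n - 2).choose (r - 1) := by
        have heq : (n - 2).choose r * r = (n - 2).choose (r - 1) * (n - 2 - (r - 1)) := by
          have := Nat.choose_succ_right_eq (n - 2) (r - 1)
          have hr1 : r - 1 + 1 = r := by omega
          rwa [hr1] at this
        have hle : n - 2 - (r - 1) ≤ r := by omega
        have : (n - 2).choose r * r ≤ (n - 2).choose (r - 1) * r := by
          rw [heq]; exact Nat.mul_le_mul_left _ hle
        exact Nat.le_of_mul_le_mul_right this (by omega)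
      have hsmall : d.choose r < s := by
        calc d.choose r ≤ (n - 2).choose r := Nat.choose_le_choose r hdn
          _ ≤ (n - 2).choose (r - 1) := hcc
          _ < s := by omega
      obtain ⟨c, hc⟩ := bad d hsmall
      exact hc (hd.2 c)
  · -- Case 2: s > C(n-1, r), RI = n
    intro hcase
    refine hRI.unique ⟨⟨by omega, ?_⟩, ?_⟩
    · intro c
      have hv : (0 : ℕ) < n := by omega
      set v : Fin n := ⟨0, hv⟩ with hvdef
      set E : Finset (Finset (Fin n)) :=
        (Finset.powersetCard (r - 1) (Finset.univ.erase v)).image (insert v) with hE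
      have hnotmem : ∀ a ∈ Finset.powersetCard (r - 1) (Finset.univ.erase v), v ∉ a := by
        intro a ha hva
        exact (Finset.mem_erase.mp ((Finset.mem_powersetCard.mp ha).1 hva)).1 rfl
      have hEcard : s ≤ E.card := by
        rw [hE, Finset.card_image_of_injOn, Finset.card_powersetCard,
          Finset.card_erase_of_mem (Finset.mem_univ v), Finset.card_univ, Fintype.card_fin]
        · exact hn.1.2
        · intro a ha b hb hab
          have : (insert v a).erase v = (insert v b).erase v := by rw [hab]
          rwa [Finset.erase_insert (hnotmem a ha), Finset.erase_insert (hnotmem b hb)] at this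
      obtain ⟨F, hFE, hFm, hF0⟩ := key n E hEcard c
      have hprop : ∀ e ∈ F, e.card = r ∧ v ∈ e := by
        intro e he
        obtain ⟨a, ha, rfl⟩ := Finset.mem_image.mp (hFE he)
        refine ⟨?_, Finset.mem_insert_self v a⟩
        rw [Finset.card_insert_of_notMem (hnotmem a ha),
          (Finset.mem_powersetCard.mp ha).2]
        omega
      refine ⟨F, hFm, fun e he => (hprop e he).1, ?_, hF0⟩
      intro e he f hf
      exact ⟨v, Finset.mem_inter.mpr ⟨(hprop e he).2, (hprop f hf).2⟩⟩
    · intro d hd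
      by_contra hlt
      push_neg at hlt
      have hsmall : d.choose r < s := by
        calc d.choose r ≤ (n - 1).choose r := Nat.choose_le_choose r (by omega)
          _ < s := by omega
      obtain ⟨c, hc⟩ := bad d hsmall
      exact hc (hd.2 c)
end
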